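/- Under the blanket assumptions, suppose additionally that g is continuously differentiable on Ω and that g* satisfies the calmness condition on dom(g*). Then for every x ∈ dom(F), one has η(x, ∇g(x)) = g(x), x ∈ ∂g*(∇g(x)), and dist(0, ∂F(x)) = dist(0, ∂Q(x, ∇g(x))), where ∂ denotes the limiting subdifferential; consequently 0 ∈ ∂F(x) if and only if 0 ∈ ∂Q(x, ∇g(x)). -/

import Mathlib

open Filter Topology Set
open scoped RealInnerProductSpace Pointwise NNReal

noncomputable section

namespace Paper

variable {E : Type*} [NormedAddCommGroup E] [InnerProductSpace ℝ E]

/-- The effective domain of an extended-real-valued function. -/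
def edom (φ : E → EReal) : Set E := {x | φ x ≠ ⊤}

/-- A function with values in `(-∞, +∞]` is proper if it is not identically `+∞`
and never takes the value `-∞`. -/
def Proper (φ : E → EReal) : Prop := (∃ x, φ x ≠ ⊤) ∧ ∀ x, φ x ≠ ⊥

/-- The Fréchet subdifferential of `φ` at `x`. -/
def frSubdiff (φ : E → EReal) (x : E) : Set E :=
  {y | φ x ≠ ⊤ ∧ 0 ≤ Filter.liminf
      (fun z : E => (φ z - φ x - ((⟪y, z - x⟫ : ℝ) : EReal)) * ((‖z - x‖⁻¹ : ℝ) : EReal))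
      (𝓝[≠] x)}

/-- The limiting (Mordukhovich) subdifferential of `φ` at `x`. -/
def limSubdiff (φ : E → EReal) (x : E) : Set E :=
  {y | ∃ u v : ℕ → E,
      Tendsto u atTop (𝓝 x) ∧ Tendsto (fun k => φ (u k)) atTop (𝓝 (φ x)) ∧
      (∀ k, v k ∈ frSubdiff φ (u k)) ∧ Tendsto v atTop (𝓝 y)}

/-- The convex subdifferential of a real-valued function. -/
def cvxSubdiff (g : E → ℝ) (x : E) : Set E :=
  {y | ∀ z, g x + ⟪y, z - x⟫ ≤ g z}

/-- The convex subdifferential of an extended-real-valued function. -/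
def cvxSubdiffE (φ : E → EReal) (x : E) : Set E :=
  {y | ∀ z, φ x + ((⟪y, z - x⟫ : ℝ) : EReal) ≤ φ z}

/-- The Fenchel conjugate of an extended-real-valued function. -/
def fconjE (φ : E → EReal) : E → EReal :=
  fun y => ⨆ x : E, (((⟪x, y⟫ : ℝ) : EReal) - φ x)

/-- The Fenchel conjugate of a real-valued function. -/
def fconj (g : E → ℝ) : E → EReal := fconjE (fun x => ((g x : ℝ) : EReal))

/-- `φ` satisfies the calmness condition at `x` relative to `A`. -/
def CalmAt (φ : E → EReal) (x : E) (A : Set E) : Prop :=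
  ∃ κ : ℝ, 0 < κ ∧ ∃ B ∈ 𝓝 x, ∀ u ∈ B ∩ A,
    φ u ≤ φ x + ((κ * ‖u - x‖ : ℝ) : EReal) ∧ φ x ≤ φ u + ((κ * ‖u - x‖ : ℝ) : EReal)

/-- `φ` satisfies the calmness condition on `A`. -/
def CalmOn (φ : E → EReal) (A : Set E) : Prop := ∀ x ∈ A, CalmAt φ x A

/-- The Kurdyka–Łojasiewicz property of `φ` at `x`. -/
def KLAt (φ : E → EReal) (x : E) : Prop :=
  ∃ ε > (0 : ℝ), ∃ δ > (0 : ℝ), ∃ ϕ ϕ' : ℝ → ℝ,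
    ϕ 0 = 0 ∧ ContinuousOn ϕ (Set.Ico 0 ε) ∧ ConcaveOn ℝ (Set.Ico 0 ε) ϕ ∧
    (∀ s ∈ Set.Ioo (0 : ℝ) ε, HasDerivAt ϕ (ϕ' s) s) ∧
    ContinuousOn ϕ' (Set.Ioo 0 ε) ∧ (∀ s ∈ Set.Ioo (0 : ℝ) ε, 0 < ϕ' s) ∧
    ∀ z ∈ Metric.ball x δ, φ x < φ z → φ z < φ x + (ε : EReal) →
      1 ≤ ENNReal.ofReal (ϕ' ((φ z).toReal - (φ x).toReal)) *
        EMetric.infEdist (0 : E) (limSubdiff φ z)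

/-- The KL property of `φ` at `x` with exponent `θ`. -/
def KLExpAt (φ : E → EReal) (x : E) (θ : ℝ) : Prop :=
  ∃ c > (0 : ℝ), ∃ ε > (0 : ℝ), ∃ δ > (0 : ℝ),
    ∀ z ∈ Metric.ball x δ, φ x < φ z → φ z < φ x + (ε : EReal) →
      ENNReal.ofReal (c * ((φ z).toReal - (φ x).toReal) ^ θ) ≤
        EMetric.infEdist (0 : E) (limSubdiff φ z)

/-- The (possibly multivalued) proximity operator of `φ`. -/
def proxSet (φ : E → EReal) (u : E) : Set E :=
  {z | ∀ w, φ z + ((‖z - u‖ ^ 2 / 2 : ℝ) : EReal) ≤ φ w + ((‖w - u‖ ^ 2 / 2 : ℝ) : EReal)}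

/-- A positive scaling of an extended-real-valued function. -/
def scaleE (α : ℝ) (φ : E → EReal) : E → EReal := fun x => ((α : ℝ) : EReal) * φ x

/-- `h` is locally Lipschitz differentiable on `s`. -/
def LocLipGradOn [CompleteSpace E] (h : E → ℝ) (s : Set E) : Prop :=
  (∀ x ∈ s, DifferentiableAt ℝ h x) ∧
  ∀ x ∈ s, ∃ U ∈ 𝓝 x, ∃ L : ℝ, ∀ u ∈ U ∩ s, ∀ v ∈ U ∩ s,
    ‖gradient h u - gradient h v‖ ≤ L * ‖u - v‖

/-- The numerator `ζ = f + h`. -/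
def zeta (f : E → EReal) (h : E → ℝ) (x : E) : EReal := f x + ((h x : ℝ) : EReal)

/-- `η(x,y) = ⟨x,y⟩ − g^*(y)`. -/
def eta (g : E → ℝ) (x y : E) : EReal := ((⟪x, y⟫ : ℝ) : EReal) - fconj g y

/-- The extended objective of the fractional problem. -/
def Ffun (f : E → EReal) (g h : E → ℝ) (x : E) : EReal :=
  if g x ≠ 0 ∧ f x ≠ ⊤ then ((((f x).toReal + h x) / g x : ℝ) : EReal) else ⊤

/-- The extended objective of the reformulated problem. -/
def Qfun (f : E → EReal) (g h : E → ℝ) (x y : E) : EReal :=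
  if f x ≠ ⊤ ∧ 0 < eta g x y then
    ((((f x).toReal + h x) / (eta g x y).toReal : ℝ) : EReal) else ⊤

/-- Pack a pair into the `ℓ²` product space. -/
def mk2 (x y : E) : WithLp 2 (E × E) := (WithLp.equiv 2 (E × E)).symm (x, y)

def pr1 (p : WithLp 2 (E × E)) : E := (WithLp.equiv 2 (E × E) p).1

def pr2 (p : WithLp 2 (E × E)) : E := (WithLp.equiv 2 (E × E) p).2

/-- `Q` as a function on the `ℓ²` product space. -/
def Qpair (f : E → EReal) (g h : E → ℝ) (p : WithLp 2 (E × E)) : EReal :=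
  Qfun f g h (pr1 p) (pr2 p)

/-- The blanket assumptions of the paper. -/
structure Blanket [CompleteSpace E] (f : E → EReal) (g h : E → ℝ) : Prop where
  f_proper : Proper f
  f_lsc : LowerSemicontinuous f
  f_cont : ContinuousOn f (edom f)
  f_bddBelow : ∃ m : ℝ, ∀ x, (m : EReal) ≤ f x
  h_lsc : LowerSemicontinuous h
  h_diff : LocLipGradOn h {x | g x ≠ 0}
  g_convex : ConvexOn ℝ Set.univ g
  g_nonneg : ∀ x, 0 ≤ g x
  omega_nonempty : ∃ x, g x ≠ 0
  zeta_nonneg : ∀ x, f x ≠ ⊤ → 0 ≤ zeta f h x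

/-- `x` is a critical point of `F`: `0 ∈ ∂̂f(x) + ∇h(x) − F(x)·∂g(x)`. -/
def IsCritF [CompleteSpace E] (f : E → EReal) (g h : E → ℝ) (x : E) : Prop :=
  g x ≠ 0 ∧ f x ≠ ⊤ ∧
  ∃ u ∈ frSubdiff f x, ∃ v ∈ cvxSubdiff g x,
    u + gradient h x - (Ffun f g h x).toReal • v = 0

/-- The level set `X = {x : F(x) ≤ F(x⁰)}`. -/
def lvlSet (f : E → EReal) (g h : E → ℝ) (x0 : E) : Set E :=
  {x | Ffun f g h x ≤ Ffun f g h x0}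

/-- The enlargement `X_{α̲}` of the level set. -/
def Xal (f : E → EReal) (g h : E → ℝ) (x0 : E) (αl : ℝ) : Set E :=
  {z | (Metric.infDist z (lvlSet f g h x0)) ^ 2 ≤ sSup (g '' lvlSet f g h x0) / αl}

/-- The compact set `𝒴 = ∪_{z ∈ X_{α̲}} ∂g(z)`. -/
def Yset (f : E → EReal) (g h : E → ℝ) (x0 : E) (αl : ℝ) : Set E :=
  ⋃ z ∈ Xal f g h x0 αl, cvxSubdiff g z

/-- The set `S = {(x,y) ∈ X × 𝒴 : η(x,y) > 0}`. -/
def Sset (f : E → EReal) (g h : E → ℝ) (x0 : E) (αl : ℝ) : Set (E × E) :=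
  {p | p.1 ∈ lvlSet f g h x0 ∧ p.2 ∈ Yset f g h x0 αl ∧ 0 < eta g p.1 p.2}

/-- The set of accumulation points of a sequence. -/
def accSet {X : Type*} [TopologicalSpace X] (pt : ℕ → X) : Set X :=
  {p | ∃ σ : ℕ → ℕ, StrictMono σ ∧ Tendsto (pt ∘ σ) atTop (𝓝 p)}

/-- A polyhedral function: its epigraph is a finite intersection of closed half-spaces. -/
def IsPolyhedralFn (φ : E → EReal) : Prop :=
  ∃ (m : ℕ) (w : Fin m → E) (c b : Fin m → ℝ),
    ∀ (x : E) (a : ℝ), (φ x ≤ (a : EReal) ↔ ∀ i, ⟪w i, x⟫ + c i * a ≤ b i)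


section Helpers
variable {E : Type*} [NormedAddCommGroup E] [InnerProductSpace ℝ E]
variable {f : E → EReal} {g h : E → ℝ}

/-- ε-characterization of the Fréchet subdifferential. -/
lemma mem_frSubdiff_iff {φ : E → EReal} {x : E} (hb : ∀ z, φ z ≠ ⊥) (hx : φ x ≠ ⊤) (y : E) :
    y ∈ frSubdiff φ x ↔ ∀ ε > (0:ℝ), ∀ᶠ z in 𝓝[≠] x,
      (((φ x).toReal + ⟪y, z - x⟫ - ε * ‖z - x‖ : ℝ) : EReal) ≤ φ z := by
  have hxb : φ x ≠ ⊥ := hb x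
  set a : ℝ := (φ x).toReal with ha
  have hφx : φ x = (a : EReal) := (EReal.coe_toReal hx hxb).symm
  constructor
  · rintro ⟨-, hlim⟩ ε hε
    have h1 : ∀ᶠ z in 𝓝[≠] x, (-(ε:ℝ) : EReal) <
        (φ z - φ x - ((⟪y, z - x⟫ : ℝ) : EReal)) * ((‖z - x‖⁻¹ : ℝ) : EReal) := by
      refine (le_liminf_iff (by isBoundedDefault) (by isBoundedDefault)).1 hlim _ ?_
      exact_mod_cast neg_neg_iff_pos.2 hε
    filter_upwards [h1, self_mem_nhdsWithin] with z hz hzx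
    have ht : (0:ℝ) < ‖z - x‖ := by
      simpa [norm_pos_iff, sub_eq_zero] using (Set.mem_compl_singleton_iff.1 hzx)
    by_cases hzt : φ z = ⊤
    · rw [hzt]; exact le_top
    · have hzb : φ z ≠ ⊥ := hb z
      set r : ℝ := (φ z).toReal with hr
      have hφz : φ z = (r : EReal) := (EReal.coe_toReal hzt hzb).symm
      rw [hφz, hφx] at hz
      rw [hφz]
      rw [show ((r:EReal) - (a:EReal) - ((⟪y, z - x⟫ : ℝ) : EReal)) * ((‖z - x‖⁻¹ : ℝ) : EReal)
            = (((r - a - ⟪y, z - x⟫) * ‖z - x‖⁻¹ : ℝ) : EReal) by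
        rw [← EReal.coe_sub, ← EReal.coe_sub, ← EReal.coe_mul]] at hz
      have hz' : -ε < (r - a - ⟪y, z - x⟫) * ‖z - x‖⁻¹ := EReal.coe_lt_coe_iff.1 hz
      rw [EReal.coe_le_coe_iff]
      have h2 : -ε * ‖z - x‖ < r - a - ⟪y, z - x⟫ :=
        (lt_div_iff₀ ht).1 (by rwa [div_eq_mul_inv])
      linarith
  · intro h
    refine ⟨hx, (le_liminf_iff (by isBoundedDefault) (by isBoundedDefault)).2 ?_⟩
    intro b hb0
    induction b with
    | bot =>
        filter_upwards [self_mem_nhdsWithin] with z hzx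
        have ht : (0:ℝ) < ‖z - x‖ := by
          simpa [norm_pos_iff, sub_eq_zero] using (Set.mem_compl_singleton_iff.1 hzx)
        have hs : (0:ℝ) < ‖z - x‖⁻¹ := inv_pos.2 ht
        by_cases hzt : φ z = ⊤
        · rw [hzt, hφx,
            show (⊤ - (a:EReal) - ((⟪y, z - x⟫ : ℝ) : EReal)) = (⊤:EReal) by
              rw [EReal.top_sub_coe, EReal.top_sub_coe],
            EReal.top_mul_coe_of_pos hs]
          exact bot_lt_top
        · have hφz : φ z = (((φ z).toReal : ℝ) : EReal) := (EReal.coe_toReal hzt (hb z)).symm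
          rw [hφz, hφx, ← EReal.coe_sub, ← EReal.coe_sub, ← EReal.coe_mul]
          exact EReal.bot_lt_coe _
    | coe b =>
        have hbneg : b < 0 := by exact_mod_cast hb0
        have hε : (0:ℝ) < -b/2 := by linarith
        filter_upwards [h (-b/2) hε, self_mem_nhdsWithin] with z hz hzx
        have ht : (0:ℝ) < ‖z - x‖ := by
          simpa [norm_pos_iff, sub_eq_zero] using (Set.mem_compl_singleton_iff.1 hzx)
        have hs : (0:ℝ) < ‖z - x‖⁻¹ := inv_pos.2 ht
        by_cases hzt : φ z = ⊤
        · rw [hzt, hφx,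
            show (⊤ - (a:EReal) - ((⟪y, z - x⟫ : ℝ) : EReal)) = (⊤:EReal) by
              rw [EReal.top_sub_coe, EReal.top_sub_coe],
            EReal.top_mul_coe_of_pos hs]
          exact lt_top_iff_ne_top.2 (EReal.coe_ne_top b)
        · set r : ℝ := (φ z).toReal with hr
          have hφz : φ z = (r : EReal) := (EReal.coe_toReal hzt (hb z)).symm
          rw [hφz] at hz
          have hz' : a + ⟪y, z - x⟫ - (-b/2) * ‖z - x‖ ≤ r := EReal.coe_le_coe_iff.1 hz
          rw [hφz, hφx, ← EReal.coe_sub, ← EReal.coe_sub, ← EReal.coe_mul]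
          rw [EReal.coe_lt_coe_iff]
          have h3 : (b/2) ≤ (r - a - ⟪y, z - x⟫) * ‖z - x‖⁻¹ := by
            have h4 : b/2 * ‖z - x‖ ≤ r - a - ⟪y, z - x⟫ := by nlinarith
            have := mul_le_mul_of_nonneg_right h4 (le_of_lt hs)
            rwa [mul_assoc, mul_inv_cancel₀ ht.ne', mul_one] at this
          linarith
    | top => exact absurd hb0 (by simp)

end Helpers
section Helpers2
variable {E : Type*} [NormedAddCommGroup E] [InnerProductSpace ℝ E]
variable {f : E → EReal} {g h : E → ℝ}

lemma coe_sub_le_fconj (g : E → ℝ) (x y : E) :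
    ((⟪x, y⟫ - g x : ℝ) : EReal) ≤ fconj g y := by
  have := le_iSup (fun z : E => (((⟪z, y⟫ : ℝ) : EReal) - ((g z : ℝ) : EReal))) x
  rwa [← EReal.coe_sub] at this

lemma fconj_ne_bot (g : E → ℝ) (y : E) : fconj g y ≠ ⊥ :=
  fun hbot => absurd (hbot ▸ coe_sub_le_fconj g 0 y) (by simp)

lemma eta_ne_top (g : E → ℝ) (x y : E) : eta g x y ≠ ⊤ := by
  unfold eta
  rcases EReal.exists_rat_btwn_of_lt (show (⊥:EReal) < fconj g y from
    bot_lt_iff_ne_bot.2 (fconj_ne_bot g y)) with ⟨q, hq1, hq2⟩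
  intro htop
  have h1 : ((⟪x,y⟫ : ℝ) : EReal) - fconj g y ≤ ((⟪x,y⟫ : ℝ) : EReal) - ((q:ℝ) : EReal) :=
    EReal.sub_le_sub le_rfl (le_of_lt hq2)
  rw [htop, ← EReal.coe_sub] at h1
  exact absurd (top_le_iff.1 h1) (EReal.coe_ne_top _)

lemma eta_pos_ne_top {x y : E} (he : 0 < eta g x y) : fconj g y ≠ ⊤ := by
  intro htop
  rw [eta, htop] at he
  simp at he

lemma eta_coe {x y : E} (he : 0 < eta g x y) :
    eta g x y = ((⟪x, y⟫ - (fconj g y).toReal : ℝ) : EReal) := by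
  have h1 := eta_pos_ne_top (g := g) he
  have h2 := fconj_ne_bot g y
  conv_lhs => rw [eta, ← EReal.coe_toReal h1 h2]
  rw [← EReal.coe_sub]

lemma etaReal_le_g {x y : E} (he : 0 < eta g x y) : (eta g x y).toReal ≤ g x := by
  have h1 := eta_pos_ne_top (g := g) he
  have h2 := fconj_ne_bot g y
  have h3 : ((⟪x, y⟫ - g x : ℝ) : EReal) ≤ fconj g y := coe_sub_le_fconj g x y
  rw [← EReal.coe_toReal h1 h2, EReal.coe_le_coe_iff] at h3
  rw [eta_coe he]
  simp only [EReal.toReal_coe]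
  linarith

lemma etaReal_pos {x y : E} (he : 0 < eta g x y) : 0 < (eta g x y).toReal := by
  have h4 := eta_coe (g := g) he
  rw [h4] at he
  rw [h4]
  simp only [EReal.toReal_coe]
  exact_mod_cast he

lemma zeta_coe {x : E} (hft : f x ≠ ⊤) (hfb : f x ≠ ⊥) :
    zeta f h x = (((f x).toReal + h x : ℝ) : EReal) := by
  conv_lhs => rw [zeta, ← EReal.coe_toReal hft hfb]
  rw [← EReal.coe_add]

lemma zeta_eq_top_iff {x : E} (hfb : f x ≠ ⊥) : zeta f h x = ⊤ ↔ f x = ⊤ := by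
  constructor
  · intro h1
    by_contra hft
    rw [zeta_coe hft hfb] at h1
    exact EReal.coe_ne_top _ h1
  · intro hft
    rw [zeta, hft]
    simp

lemma Ffun_ne_bot (f : E → EReal) (g h : E → ℝ) (z : E) : Ffun f g h z ≠ ⊥ := by
  unfold Ffun; split <;> simp

lemma Qfun_ne_bot (f : E → EReal) (g h : E → ℝ) (z y : E) : Qfun f g h z y ≠ ⊥ := by
  unfold Qfun; split <;> simp

lemma Ffun_ne_top_iff {x : E} : Ffun f g h x ≠ ⊤ ↔ g x ≠ 0 ∧ f x ≠ ⊤ := by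
  unfold Ffun
  constructor
  · intro h1; by_contra h2; rw [if_neg] at h1 <;> simp_all
  · intro h1; rw [if_pos h1]; simp

lemma Ffun_eq {x : E} (hg : g x ≠ 0) (hf : f x ≠ ⊤) :
    Ffun f g h x = ((((f x).toReal + h x) / g x : ℝ) : EReal) := by
  unfold Ffun; rw [if_pos ⟨hg, hf⟩]

lemma Qfun_eq {x y : E} (hf : f x ≠ ⊤) (he : 0 < eta g x y) :
    Qfun f g h x y = ((((f x).toReal + h x) / (eta g x y).toReal : ℝ) : EReal) := by
  unfold Qfun; rw [if_pos ⟨hf, he⟩]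

lemma Qfun_ne_top_elim {x y : E} (hq : Qfun f g h x y ≠ ⊤) :
    f x ≠ ⊤ ∧ 0 < eta g x y := by
  by_contra h2; rw [Qfun, if_neg h2] at hq; exact hq rfl

lemma Qfun_nonneg (hzn : ∀ x, f x ≠ ⊤ → 0 ≤ zeta f h x) (hfb : ∀ x, f x ≠ ⊥) (z y : E) :
    0 ≤ Qfun f g h z y := by
  unfold Qfun
  split
  · rename_i hcond
    have h1 : 0 ≤ (f z).toReal + h z := by
      have := hzn z hcond.1
      rw [zeta_coe hcond.1 (hfb z)] at this
      exact_mod_cast this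
    have h2 := etaReal_pos (g := g) hcond.2
    exact EReal.coe_nonneg.2 (div_nonneg h1 (le_of_lt h2))
  · exact le_top

end Helpers2
section Helpers3
variable {E : Type*} [NormedAddCommGroup E] [InnerProductSpace ℝ E] [CompleteSpace E]
variable {g : E → ℝ}

lemma inner_gradient_eq {x : E} (hd : DifferentiableAt ℝ g x) (v : E) :
    ⟪gradient g x, v⟫ = fderiv ℝ g x v := by
  rw [gradient]
  exact InnerProductSpace.toDual_symm_apply

lemma convex_grad_ineq (hg : ConvexOn ℝ Set.univ g) {x : E} (hd : DifferentiableAt ℝ g x)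
    (z : E) : g x + ⟪gradient g x, z - x⟫ ≤ g z := by
  rw [inner_gradient_eq hd]
  set d : ℝ := fderiv ℝ g x (z - x) with hdd
  -- the function along the segment
  set φ : ℝ → ℝ := fun t => g (x + t • (z - x)) with hφ
  have hline : HasDerivAt (fun t : ℝ => x + t • (z - x)) (z - x) 0 := by
    simpa using ((hasDerivAt_id (0:ℝ)).smul_const (z - x)).const_add x
  have hφ0 : HasDerivAt φ d 0 := by
    have hg' : HasFDerivAt g (fderiv ℝ g x) ((fun t : ℝ => x + t • (z - x)) 0) := by
      simpa using hd.hasFDerivAt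
    have hcomp := hg'.comp_hasDerivAt 0 hline
    simp only [Function.comp_def] at hcomp
    simpa [hφ, hdd] using hcomp
  -- slope bound from convexity
  have hslope : ∀ t ∈ Set.Ioo (0:ℝ) 1, (φ t - φ 0) / t ≤ g z - g x := by
    intro t ht
    have hconv := hg.2 (Set.mem_univ x) (Set.mem_univ z)
      (by linarith [ht.1, ht.2] : (0:ℝ) ≤ 1 - t) (le_of_lt ht.1) (by ring)
    have hxt : (1 - t) • x + t • z = x + t • (z - x) := by
      rw [smul_sub, sub_smul, one_smul]; abel
    rw [hxt] at hconv
    have hφt : φ t ≤ (1 - t) * g x + t * g z := by simpa [hφ, smul_eq_mul] using hconv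
    have hφ00 : φ 0 = g x := by simp [hφ]
    rw [div_le_iff₀ ht.1, hφ00]
    nlinarith
  -- derivative is a limit of slopes from the right
  have htend : Filter.Tendsto (fun t : ℝ => (φ t - φ 0) / t) (𝓝[>] (0:ℝ)) (𝓝 d) := by
    have h1 := hasDerivAt_iff_tendsto_slope.1 hφ0
    have h2 : 𝓝[>] (0:ℝ) ≤ 𝓝[≠] (0:ℝ) :=
      nhdsWithin_mono _ (fun t ht => ne_of_gt ht)
    have := h1.mono_left h2
    refine this.congr' ?_
    filter_upwards [self_mem_nhdsWithin] with t ht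
    rw [slope_def_field]
    rw [sub_zero]
  have hd_le : d ≤ g z - g x := by
    refine le_of_tendsto htend ?_
    filter_upwards [Ioo_mem_nhdsGT_of_mem (by norm_num : (0:ℝ) ∈ Set.Ico (0:ℝ) 1)] with t ht
    exact hslope t ht
  linarith

lemma fconj_gradient (hg : ConvexOn ℝ Set.univ g) {x : E} (hd : DifferentiableAt ℝ g x) :
    fconj g (gradient g x) = ((⟪x, gradient g x⟫ - g x : ℝ) : EReal) := by
  refine le_antisymm ?_ (coe_sub_le_fconj g x _)
  refine iSup_le fun z => ?_
  rw [← EReal.coe_sub, EReal.coe_le_coe_iff]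
  have h1 := convex_grad_ineq hg hd z
  have h2 : ⟪gradient g x, z - x⟫ = ⟪gradient g x, z⟫ - ⟪gradient g x, x⟫ := inner_sub_right _ _ _
  have h3 : ⟪gradient g x, z⟫ = ⟪z, gradient g x⟫ := real_inner_comm _ _
  have h4 : ⟪gradient g x, x⟫ = ⟪x, gradient g x⟫ := real_inner_comm _ _
  linarith

lemma eta_gradient (hg : ConvexOn ℝ Set.univ g) {x : E} (hd : DifferentiableAt ℝ g x) :
    eta g x (gradient g x) = ((g x : ℝ) : EReal) := by
  rw [eta, fconj_gradient hg hd, ← EReal.coe_sub]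
  norm_num

end Helpers3
section Helpers4
variable {E : Type*} [NormedAddCommGroup E] [InnerProductSpace ℝ E]

lemma eventually_norm_sub_lt (x : E) {r : ℝ} (hr : 0 < r) :
    ∀ᶠ z in 𝓝 x, ‖z - x‖ < r := by
  have hball := Metric.ball_mem_nhds x hr
  filter_upwards [hball] with z hz
  rwa [Metric.mem_ball, dist_eq_norm] at hz

lemma hw_of_hasFDerivAt {ψ : E → ℝ} {L : E →L[ℝ] ℝ} {x : E} (hL : HasFDerivAt ψ L x)
    (w : E) (hwL : ∀ v, ⟪w, v⟫ = L v) :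
    ∀ ε > (0:ℝ), ∀ᶠ z in 𝓝 x, |ψ z - ψ x - ⟪w, z - x⟫| ≤ ε * ‖z - x‖ := by
  intro ε hε
  filter_upwards [hL.isLittleO.def hε] with z hz
  rw [hwL]
  simpa [Real.norm_eq_abs] using hz

set_option maxHeartbeats 1000000 in
/-- One-sided exact product rule for the Fréchet subdifferential with a
positive differentiable factor. -/
lemma prod_rule {ζ Φ : E → EReal} {ψ : E → ℝ} {x w ξ : E}
    (hζb : ∀ z, ζ z ≠ ⊥) (hζnn : ∀ z, 0 ≤ ζ z) (hζx : ζ x ≠ ⊤)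
    (hΦb : ∀ z, Φ z ≠ ⊥)
    (hψx : 0 < ψ x)
    (hw : ∀ ε > (0:ℝ), ∀ᶠ z in 𝓝 x, |ψ z - ψ x - ⟪w, z - x⟫| ≤ ε * ‖z - x‖)
    (hagree : ∀ᶠ z in 𝓝 x, Φ z = ζ z * ((ψ z : ℝ) : EReal))
    (hξ : ξ ∈ frSubdiff ζ x) :
    ψ x • ξ + (ζ x).toReal • w ∈ frSubdiff Φ x := by
  set a : ℝ := (ζ x).toReal with haa
  set b : ℝ := ψ x with hbb
  have ha0 : 0 ≤ a := by
    have := hζnn x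
    rw [← EReal.coe_toReal hζx (hζb x)] at this
    exact_mod_cast this
  have hζxc : ζ x = (a : EReal) := (EReal.coe_toReal hζx (hζb x)).symm
  have hΦxc : Φ x = ((a * b : ℝ) : EReal) := by
    rw [hagree.self_of_nhds, hζxc, ← EReal.coe_mul]
  have hΦx : Φ x ≠ ⊤ := by rw [hΦxc]; exact EReal.coe_ne_top _
  rw [mem_frSubdiff_iff hΦb hΦx]
  intro ε hε
  have hΦtr : (Φ x).toReal = a * b := by rw [hΦxc, EReal.toReal_coe]
  set M : ℝ := b + 1 with hM
  set K : ℝ := a + M + 2 with hK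
  have hKpos : 0 < K := by simp only [hK, hM]; linarith
  set ε' : ℝ := ε / K with hε'def
  have hε' : 0 < ε' := div_pos hε hKpos
  set Cξ : ℝ := ‖ξ‖ with hCξ
  set Cw : ℝ := ‖w‖ with hCw
  set D : ℝ := Cξ * (Cw + ε') with hD
  have hD0 : 0 ≤ D := by positivity
  set r0 : ℝ := min 1 (ε' / (D + 1)) with hr0
  have hr0pos : 0 < r0 := lt_min one_pos (div_pos hε' (by linarith))
  set r1 : ℝ := min (b/2) 1 / (Cw + 1) with hr1
  have hr1pos : 0 < r1 := div_pos (lt_min (by linarith) one_pos) (by positivity)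
  -- the main events
  have Ev1 := ((mem_frSubdiff_iff hζb hζx ξ).1 hξ) ε' hε'
  have Ev2 := (hw ε' hε').filter_mono (nhdsWithin_le_nhds : 𝓝[≠] x ≤ 𝓝 x)
  have Ev3 : ∀ᶠ z in 𝓝[≠] x, b/2 ≤ ψ z ∧ ψ z ≤ M := by
    have h1 := hw 1 one_pos
    have h2 := eventually_norm_sub_lt x hr1pos
    refine ((h1.and h2).filter_mono (nhdsWithin_le_nhds : 𝓝[≠] x ≤ 𝓝 x)).mono ?_
    rintro z ⟨hz1, hz2⟩
    have hd : |⟪w, z - x⟫| ≤ Cw * ‖z - x‖ := abs_real_inner_le_norm w (z - x)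
    have habs : |ψ z - b| ≤ (Cw + 1) * ‖z - x‖ := by
      have := abs_add_le (ψ z - b - ⟪w, z - x⟫) ⟪w, z - x⟫
      simp only [sub_add_cancel] at this
      calc |ψ z - b| ≤ |ψ z - b - ⟪w, z - x⟫| + |⟪w, z - x⟫| := this
        _ ≤ 1 * ‖z - x‖ + Cw * ‖z - x‖ := add_le_add hz1 hd
        _ = (Cw + 1) * ‖z - x‖ := by ring
    have hsmall : (Cw + 1) * ‖z - x‖ < min (b/2) 1 := by
      have hCw1 : (0:ℝ) < Cw + 1 := by positivity
      calc (Cw + 1) * ‖z - x‖ < (Cw + 1) * r1 := by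
            exact mul_lt_mul_of_pos_left hz2 hCw1
        _ = min (b/2) 1 := by rw [hr1]; exact mul_div_cancel₀ _ hCw1.ne'
    have hmin1 : min (b/2) 1 ≤ b/2 := min_le_left _ _
    have hmin2 : min (b/2) 1 ≤ 1 := min_le_right _ _
    constructor
    · nlinarith [abs_le.1 habs]
    · nlinarith [abs_le.1 habs]
  have Ev4 := (eventually_norm_sub_lt x hr0pos).filter_mono
    (nhdsWithin_le_nhds : 𝓝[≠] x ≤ 𝓝 x)
  have Ev5 := hagree.filter_mono (nhdsWithin_le_nhds : 𝓝[≠] x ≤ 𝓝 x)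
  filter_upwards [Ev1, Ev2, Ev3, Ev4, Ev5] with z h1 h2 h3 h4 h5
  have hpzpos : 0 < ψ z := lt_of_lt_of_le (by linarith) h3.1
  by_cases hζz : ζ z = ⊤
  · rw [h5, hζz, EReal.top_mul_coe_of_pos hpzpos]
    exact le_top
  · set r : ℝ := (ζ z).toReal with hrdef
    have hζzc : ζ z = (r : EReal) := (EReal.coe_toReal hζz (hζb z)).symm
    have hr0' : 0 ≤ r := by
      have := hζnn z; rw [hζzc] at this; exact_mod_cast this
    have hΦzc : Φ z = ((r * ψ z : ℝ) : EReal) := by rw [h5, hζzc, ← EReal.coe_mul]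
    rw [hΦzc, hΦtr]
    rw [hζzc] at h1
    have F1 : a + ⟪ξ, z - x⟫ - ε' * ‖z - x‖ ≤ r := EReal.coe_le_coe_iff.1 h1
    rw [EReal.coe_le_coe_iff]
    -- all-real computation
    set c : ℝ := ⟪ξ, z - x⟫ with hc
    set dd : ℝ := ⟪w, z - x⟫ with hdd2
    set t : ℝ := ‖z - x‖ with htt
    set pz : ℝ := ψ z with hpz
    have ht0 : 0 ≤ t := norm_nonneg _
    have F2 := abs_le.1 h2
    have F5 : |c| ≤ Cξ * t := abs_real_inner_le_norm ξ (z - x)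
    have F6 : |dd| ≤ Cw * t := abs_real_inner_le_norm w (z - x)
    have hinner : ⟪b • ξ + a • w, z - x⟫ = b * c + a * dd := by
      rw [inner_add_left, real_inner_smul_left, real_inner_smul_left]
    rw [hinner]
    have hDt : D * t ≤ ε' := by
      have ht1 : t < ε' / (D + 1) := lt_of_lt_of_le h4 (min_le_right _ _)
      have ht2 : t * (D + 1) ≤ ε' := by
        rw [← le_div_iff₀ (by linarith : (0:ℝ) < D + 1)]
        exact ht1.le
      nlinarith [ht2, ht0]
    have S1 : (a + c - ε' * t) * pz ≤ r * pz :=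
      mul_le_mul_of_nonneg_right F1 hpzpos.le
    have S2 : a * (b + dd - ε' * t) ≤ a * pz := by
      apply mul_le_mul_of_nonneg_left _ ha0
      linarith [F2.1]
    have S3 : |b - pz| ≤ Cw * t + ε' * t := by
      have habs : |pz - b| ≤ |pz - b - dd| + |dd| := by
        have := abs_add_le (pz - b - dd) dd
        simpa [sub_add_cancel] using this
      rw [abs_sub_comm]
      calc |pz - b| ≤ |pz - b - dd| + |dd| := habs
        _ ≤ ε' * t + Cw * t := add_le_add h2 F6
        _ = Cw * t + ε' * t := by ring
    have S4 : c * b - c * pz ≤ ε' * t := by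
      have h6 : c * b - c * pz ≤ |c| * |b - pz| := by
        calc c * b - c * pz = c * (b - pz) := by ring
          _ ≤ |c * (b - pz)| := le_abs_self _
          _ = |c| * |b - pz| := abs_mul _ _
      have h7 : |c| * |b - pz| ≤ (Cξ * t) * (Cw * t + ε' * t) :=
        mul_le_mul F5 S3 (abs_nonneg _) (by positivity)
      have h8 : (Cξ * t) * (Cw * t + ε' * t) ≤ ε' * t := by
        have ht1 : t ≤ 1 := le_of_lt (lt_of_lt_of_le h4 (min_le_left _ _))
        nlinarith [mul_nonneg ht0 ht0, hDt]
      linarith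
    have S5 : ε' * t * pz ≤ ε' * t * M := by
      apply mul_le_mul_of_nonneg_left h3.2 (by positivity)
    have hεt : (a + M + 1) * (ε' * t) ≤ ε * t := by
      have hεK : ε = K * ε' := by rw [hε'def]; exact (mul_div_cancel₀ _ hKpos.ne').symm
      nlinarith [mul_nonneg hε'.le ht0]
    nlinarith [S1, S2, S4, S5, hεt]

end Helpers4
section Helpers5
variable {E : Type*} [NormedAddCommGroup E] [InnerProductSpace ℝ E]
variable {f : E → EReal} {g h : E → ℝ}

lemma pr1_mk2 (a b : E) : pr1 (mk2 a b) = a := rfl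
lemma pr2_mk2 (a b : E) : pr2 (mk2 a b) = b := rfl
lemma mk2_pr (p : WithLp 2 (E × E)) : mk2 (pr1 p) (pr2 p) = p := rfl
lemma mk2_sub (a b c d : E) : mk2 a b - mk2 c d = mk2 (a - c) (b - d) := rfl
lemma mk2_zero : mk2 (0 : E) 0 = 0 := rfl

lemma norm_mk2 (a b : E) : ‖mk2 a b‖ = Real.sqrt (‖a‖ ^ 2 + ‖b‖ ^ 2) := by
  rw [show mk2 a b = ((WithLp.equiv 2 (E × E)).symm (a, b)) from rfl]
  rw [WithLp.prod_norm_eq_of_L2]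
  norm_num

lemma inner_mk2 (a b c d : E) : (⟪mk2 a b, mk2 c d⟫ : ℝ) = ⟪a, c⟫ + ⟪b, d⟫ :=
  WithLp.prod_inner_apply _ _

lemma norm_mk2_zero (a : E) : ‖mk2 a (0:E)‖ = ‖a‖ := by
  rw [norm_mk2]
  simp [Real.sqrt_sq (norm_nonneg a)]

lemma norm_le_norm_mk2_left (a b : E) : ‖a‖ ≤ ‖mk2 a b‖ := by
  calc ‖a‖ = Real.sqrt (‖a‖^2) := (Real.sqrt_sq (norm_nonneg a)).symm
    _ ≤ Real.sqrt (‖a‖^2 + ‖b‖^2) := Real.sqrt_le_sqrt (by nlinarith [sq_nonneg ‖b‖])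
    _ = ‖mk2 a b‖ := (norm_mk2 a b).symm

lemma norm_le_norm_mk2_right (a b : E) : ‖b‖ ≤ ‖mk2 a b‖ := by
  calc ‖b‖ = Real.sqrt (‖b‖^2) := (Real.sqrt_sq (norm_nonneg b)).symm
    _ ≤ Real.sqrt (‖a‖^2 + ‖b‖^2) := Real.sqrt_le_sqrt (by nlinarith [sq_nonneg ‖a‖])
    _ = ‖mk2 a b‖ := (norm_mk2 a b).symm

/-- Restriction of a Fréchet subgradient of a function on the product space to an `x`-slice. -/
lemma fr_slice {φ : WithLp 2 (E × E) → EReal} (hbφ : ∀ p, φ p ≠ ⊥) {x y u v : E}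
    (hm : mk2 u v ∈ frSubdiff φ (mk2 x y)) :
    u ∈ frSubdiff (fun z => φ (mk2 z y)) x := by
  have hφx : φ (mk2 x y) ≠ ⊤ := hm.1
  rw [mem_frSubdiff_iff hbφ hφx] at hm
  rw [mem_frSubdiff_iff (fun z => hbφ (mk2 z y)) hφx]
  intro ε hε
  obtain ⟨δ, hδ, hsub⟩ := Metric.mem_nhdsWithin_iff.1 (hm ε hε)
  refine Metric.mem_nhdsWithin_iff.2 ⟨δ, hδ, ?_⟩
  rintro z ⟨hzball, hzne⟩
  have hzx : z ≠ x := hzne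
  have hpball : mk2 z y ∈ Metric.ball (mk2 x y) δ := by
    rw [Metric.mem_ball, dist_eq_norm, mk2_sub, sub_self, norm_mk2_zero]
    rwa [Metric.mem_ball, dist_eq_norm] at hzball
  have hpne : mk2 z y ∈ ({mk2 x y}ᶜ : Set (WithLp 2 (E × E))) := by
    intro hmem
    exact hzx (congrArg pr1 (Set.mem_singleton_iff.1 hmem))
  have := hsub ⟨hpball, hpne⟩
  simp only [Set.mem_setOf_eq] at this ⊢
  rw [mk2_sub, sub_self, norm_mk2_zero, inner_mk2, inner_zero_right, add_zero] at this
  exact this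

/-- If `u` is a Fréchet subgradient of `F` at a point of its domain, then `(u,0)` is a
Fréchet subgradient of `Q` at `(x, ∇g(x))`. -/
lemma keyQ (hzn : ∀ z, f z ≠ ⊤ → 0 ≤ zeta f h z) (hfb : ∀ z, f z ≠ ⊥)
    (hgnn : ∀ z, 0 ≤ g z) (hgcvx : ConvexOn ℝ Set.univ g)
    [CompleteSpace E]
    {x : E} (hgx : g x ≠ 0) (hfx : f x ≠ ⊤) (hd : DifferentiableAt ℝ g x)
    {u : E} (hu : u ∈ frSubdiff (Ffun f g h) x) :
    mk2 u 0 ∈ frSubdiff (Qpair f g h) (mk2 x (gradient g x)) := by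
  have hgpos : 0 < g x := lt_of_le_of_ne (hgnn x) (Ne.symm hgx)
  have hetag : eta g x (gradient g x) = ((g x : ℝ) : EReal) := eta_gradient hgcvx hd
  have hetapos : 0 < eta g x (gradient g x) := by
    rw [hetag]; exact_mod_cast hgpos
  have hQbase : Qpair f g h (mk2 x (gradient g x)) = Ffun f g h x := by
    show Qfun f g h x (gradient g x) = _
    rw [Qfun_eq hfx hetapos, Ffun_eq hgx hfx, hetag]
    norm_num
  have hQnb : ∀ p : WithLp 2 (E × E), Qpair f g h p ≠ ⊥ := fun p => Qfun_ne_bot f g h _ _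
  have hFnt : Ffun f g h x ≠ ⊤ := Ffun_ne_top_iff.2 ⟨hgx, hfx⟩
  have hQnt : Qpair f g h (mk2 x (gradient g x)) ≠ ⊤ := by rw [hQbase]; exact hFnt
  rw [mem_frSubdiff_iff hQnb hQnt]
  intro ε hε
  rw [mem_frSubdiff_iff (Ffun_ne_bot f g h) hFnt] at hu
  obtain ⟨δ, hδ, hsub⟩ := Metric.mem_nhdsWithin_iff.1 (hu ε hε)
  refine Metric.mem_nhdsWithin_iff.2 ⟨δ, hδ, ?_⟩
  rintro p ⟨hpball, -⟩
  simp only [Set.mem_setOf_eq]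
  set x' : E := pr1 p with hx'
  set y' : E := pr2 p with hy'
  have hpmk : p = mk2 x' y' := rfl
  have hnormle : ‖x' - x‖ ≤ ‖p - mk2 x (gradient g x)‖ := by
    rw [hpmk, mk2_sub]
    exact norm_le_norm_mk2_left _ _
  have hpballn : ‖p - mk2 x (gradient g x)‖ < δ := by
    rwa [Metric.mem_ball, dist_eq_norm] at hpball
  have hinner : (⟪mk2 u 0, p - mk2 x (gradient g x)⟫ : ℝ) = ⟪u, x' - x⟫ := by
    rw [hpmk, mk2_sub, inner_mk2, inner_zero_left, add_zero]
  by_cases hqt : Qpair f g h p = ⊤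
  · rw [hqt]; exact le_top
  · obtain ⟨hfx', he'⟩ := Qfun_ne_top_elim (f := f) (g := g) (h := h) hqt
    have hetaR := etaReal_pos (g := g) he'
    have hgx'pos : 0 < g x' := lt_of_lt_of_le hetaR (etaReal_le_g he')
    have hnum : 0 ≤ (f x').toReal + h x' := by
      have := hzn x' hfx'
      rw [zeta_coe hfx' (hfb x')] at this
      exact_mod_cast this
    have hQF : Ffun f g h x' ≤ Qfun f g h x' y' := by
      rw [Ffun_eq hgx'pos.ne' hfx', Qfun_eq hfx' he', EReal.coe_le_coe_iff]
      exact div_le_div_of_nonneg_left hnum hetaR (etaReal_le_g he')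
    have hFbd : (((Ffun f g h x).toReal + ⟪u, x' - x⟫ - ε * ‖x' - x‖ : ℝ) : EReal)
        ≤ Ffun f g h x' := by
      by_cases hxx : x' = x
      · rw [hxx]
        simp only [sub_self, inner_zero_right, norm_zero, mul_zero, add_zero, sub_zero]
        rw [Ffun_eq hgx hfx]
        simp [EReal.toReal_coe]
      · refine hsub ⟨?_, hxx⟩
        rw [Metric.mem_ball, dist_eq_norm]
        exact lt_of_le_of_lt hnormle hpballn
    calc (((Qpair f g h (mk2 x (gradient g x))).toReal
            + ⟪mk2 u 0, p - mk2 x (gradient g x)⟫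
            - ε * ‖p - mk2 x (gradient g x)‖ : ℝ) : EReal)
        ≤ (((Ffun f g h x).toReal + ⟪u, x' - x⟫ - ε * ‖x' - x‖ : ℝ) : EReal) := by
          rw [hQbase, hinner, EReal.coe_le_coe_iff]
          have : ε * ‖x' - x‖ ≤ ε * ‖p - mk2 x (gradient g x)‖ :=
            mul_le_mul_of_nonneg_left hnormle hε.le
          linarith
      _ ≤ Ffun f g h x' := hFbd
      _ ≤ Qfun f g h x' y' := hQF
      _ = Qpair f g h p := rfl

end Helpers5
section Helpers6
variable {E : Type*} [NormedAddCommGroup E] [InnerProductSpace ℝ E]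
variable {f : E → EReal} {g h : E → ℝ}

lemma zeta_ne_bot (hfb : ∀ z, f z ≠ ⊥) (z : E) : zeta f h z ≠ ⊥ := by
  by_cases hfz : f z = ⊤
  · rw [zeta, hfz]; simp
  · rw [zeta_coe hfz (hfb z)]; simp

lemma zeta_nonneg_all (hzn : ∀ z, f z ≠ ⊤ → 0 ≤ zeta f h z) (z : E) : 0 ≤ zeta f h z := by
  by_cases hfz : f z = ⊤
  · rw [zeta, hfz]; simp
  · exact hzn z hfz

lemma Qfun_grad_eq (hgnn : ∀ z, 0 ≤ g z) (hgcvx : ConvexOn ℝ Set.univ g) [CompleteSpace E]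
    {z : E} (hgz : g z ≠ 0) (hfz : f z ≠ ⊤) (hd : DifferentiableAt ℝ g z) :
    Qfun f g h z (gradient g z) = Ffun f g h z := by
  have hgpos : 0 < g z := lt_of_le_of_ne (hgnn z) (Ne.symm hgz)
  have hetag : eta g z (gradient g z) = ((g z : ℝ) : EReal) := eta_gradient hgcvx hd
  have hetapos : 0 < eta g z (gradient g z) := by rw [hetag]; exact_mod_cast hgpos
  rw [Qfun_eq hfz hetapos, Ffun_eq hgz hfz, hetag]
  norm_num

lemma tendsto_mk2 {x y : E} {xs ys : ℕ → E} (hx : Tendsto xs atTop (𝓝 x))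
    (hy : Tendsto ys atTop (𝓝 y)) :
    Tendsto (fun k => mk2 (xs k) (ys k)) atTop (𝓝 (mk2 x y)) := by
  have hL := (WithLp.prodContinuousLinearEquiv 2 ℝ E E).symm.continuous.tendsto (x, y)
  exact hL.comp (hx.prodMk_nhds hy)

lemma tendsto_pr1 {P : ℕ → WithLp 2 (E × E)} {p : WithLp 2 (E × E)}
    (hp : Tendsto P atTop (𝓝 p)) : Tendsto (fun k => pr1 (P k)) atTop (𝓝 (pr1 p)) := by
  have hc : Continuous (fun q : WithLp 2 (E × E) => pr1 q) :=
    continuous_fst.comp (WithLp.prodContinuousLinearEquiv 2 ℝ E E).continuous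
  exact (hc.tendsto p).comp hp

lemma tendsto_pr2 {P : ℕ → WithLp 2 (E × E)} {p : WithLp 2 (E × E)}
    (hp : Tendsto P atTop (𝓝 p)) : Tendsto (fun k => pr2 (P k)) atTop (𝓝 (pr2 p)) := by
  have hc : Continuous (fun q : WithLp 2 (E × E) => pr2 q) :=
    continuous_snd.comp (WithLp.prodContinuousLinearEquiv 2 ℝ E E).continuous
  exact (hc.tendsto p).comp hp

/-- Easy inclusion at the limiting level: `∂F(x) × {0} ⊆ ∂Q(x, ∇g(x))`. -/
lemma lim_incl_FQ (hzn : ∀ z, f z ≠ ⊤ → 0 ≤ zeta f h z) (hfb : ∀ z, f z ≠ ⊥)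
    (hgnn : ∀ z, 0 ≤ g z) (hgcvx : ConvexOn ℝ Set.univ g) (hgc : Continuous g)
    [CompleteSpace E]
    (hgdiff : ∀ z, g z ≠ 0 → DifferentiableAt ℝ g z)
    (hgradcont : ContinuousOn (gradient g) {z | g z ≠ 0})
    {x : E} (hgx : g x ≠ 0) (hfx : f x ≠ ⊤)
    {u : E} (hu : u ∈ limSubdiff (Ffun f g h) x) :
    mk2 u 0 ∈ limSubdiff (Qpair f g h) (mk2 x (gradient g x)) := by
  obtain ⟨xs, vs, hxs, hF, hmem, hvs⟩ := hu
  have hFk : ∀ k, Ffun f g h (xs k) ≠ ⊤ := fun k => (hmem k).1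
  have hgk : ∀ k, g (xs k) ≠ 0 := fun k => (Ffun_ne_top_iff.1 (hFk k)).1
  have hfk : ∀ k, f (xs k) ≠ ⊤ := fun k => (Ffun_ne_top_iff.1 (hFk k)).2
  have hopen : IsOpen {z : E | g z ≠ 0} := isOpen_compl_singleton.preimage hgc
  have hgradat : ContinuousAt (gradient g) x :=
    (hgradcont x hgx).continuousAt (hopen.mem_nhds hgx)
  have hys : Tendsto (fun k => gradient g (xs k)) atTop (𝓝 (gradient g x)) :=
    hgradat.tendsto.comp hxs
  refine ⟨fun k => mk2 (xs k) (gradient g (xs k)), fun k => mk2 (vs k) 0,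
    tendsto_mk2 hxs hys, ?_, ?_, tendsto_mk2 hvs tendsto_const_nhds⟩
  · have hval : ∀ k, Qpair f g h (mk2 (xs k) (gradient g (xs k))) = Ffun f g h (xs k) :=
      fun k => Qfun_grad_eq hgnn hgcvx (hgk k) (hfk k) (hgdiff _ (hgk k))
    have hval0 : Qpair f g h (mk2 x (gradient g x)) = Ffun f g h x :=
      Qfun_grad_eq hgnn hgcvx hgx hfx (hgdiff _ hgx)
    rw [hval0]
    exact hF.congr (fun k => (hval k).symm)
  · intro k
    exact keyQ hzn hfb hgnn hgcvx (hgk k) (hfk k) (hgdiff _ (hgk k)) (hmem k)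

end Helpers6
section Helpers7
variable {E : Type*} [NormedAddCommGroup E] [InnerProductSpace ℝ E]
variable {f : E → EReal} {g h : E → ℝ}

/-- Hard inclusion at the limiting level: the first component of any element of
`∂Q(x, ∇g(x))` belongs to `∂F(x)`. -/
lemma lim_incl_QF (hzn : ∀ z, f z ≠ ⊤ → 0 ≤ zeta f h z) (hfb : ∀ z, f z ≠ ⊥)
    (hgnn : ∀ z, 0 ≤ g z) (hgcvx : ConvexOn ℝ Set.univ g) (hgc : Continuous g)
    [CompleteSpace E]
    (hgdiff : ∀ z, g z ≠ 0 → DifferentiableAt ℝ g z)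
    (hgradcont : ContinuousOn (gradient g) {z | g z ≠ 0})
    (hcalm : CalmOn (fconj g) (edom (fconj g)))
    {x : E} (hgx : g x ≠ 0) (hfx : f x ≠ ⊤)
    {p : WithLp 2 (E × E)} (hp : p ∈ limSubdiff (Qpair f g h) (mk2 x (gradient g x))) :
    pr1 p ∈ limSubdiff (Ffun f g h) x := by
  obtain ⟨P, V, hP, hQ, hmem, hV⟩ := hp
  set yb : E := gradient g x with hyb
  have hgpos : 0 < g x := lt_of_le_of_ne (hgnn x) (Ne.symm hgx)
  set xs : ℕ → E := fun k => pr1 (P k) with hxsdef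
  set ys : ℕ → E := fun k => pr2 (P k) with hysdef
  set us : ℕ → E := fun k => pr1 (V k) with husdef
  set vs : ℕ → E := fun k => pr2 (V k) with hvsdef
  have hxs : Tendsto xs atTop (𝓝 x) := tendsto_pr1 hP
  have hys : Tendsto ys atTop (𝓝 yb) := tendsto_pr2 hP
  have hus : Tendsto us atTop (𝓝 (pr1 p)) := tendsto_pr1 hV
  -- basic per-index facts
  have hQk : ∀ k, Qfun f g h (xs k) (ys k) ≠ ⊤ := fun k => (hmem k).1
  have hfk : ∀ k, f (xs k) ≠ ⊤ := fun k => (Qfun_ne_top_elim (hQk k)).1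
  have hek : ∀ k, 0 < eta g (xs k) (ys k) := fun k => (Qfun_ne_top_elim (hQk k)).2
  set r : ℕ → ℝ := fun k => (fconj g (ys k)).toReal with hrdef
  have hconjk : ∀ k, fconj g (ys k) = ((r k : ℝ) : EReal) :=
    fun k => (EReal.coe_toReal (eta_pos_ne_top (hek k)) (fconj_ne_bot _ _)).symm
  set η : ℕ → ℝ := fun k => (eta g (xs k) (ys k)).toReal with hηdef
  have hηpos : ∀ k, 0 < η k := fun k => etaReal_pos (hek k)
  have hgk : ∀ k, 0 < g (xs k) := fun k => lt_of_lt_of_le (hηpos k) (etaReal_le_g (hek k))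
  have hηform : ∀ k, η k = ⟪xs k, ys k⟫ - r k := by
    intro k
    rw [hηdef]
    simp only
    rw [eta_coe (hek k), EReal.toReal_coe, hrdef]
  -- values
  set ζs : ℕ → ℝ := fun k => (f (xs k)).toReal + h (xs k) with hζsdef
  set Qv : ℕ → ℝ := fun k => ζs k / η k with hQvdef
  have hQval : ∀ k, Qfun f g h (xs k) (ys k) = ((Qv k : ℝ) : EReal) := fun k =>
    Qfun_eq (hfk k) (hek k)
  set ζb : ℝ := (f x).toReal + h x with hζbdef
  set Fb : ℝ := ζb / g x with hFbdef
  have hFxval : Ffun f g h x = ((Fb : ℝ) : EReal) := Ffun_eq hgx hfx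
  have hQtarget : Qpair f g h (mk2 x yb) = ((Fb : ℝ) : EReal) := by
    rw [show Qpair f g h (mk2 x yb) = Qfun f g h x yb from rfl,
      Qfun_grad_eq hgnn hgcvx hgx hfx (hgdiff _ hgx), hFxval]
  have hQreal : Tendsto Qv atTop (𝓝 Fb) := by
    have h1 : Tendsto (fun k => Qpair f g h (P k)) atTop (𝓝 (Qpair f g h (mk2 x yb))) := hQ
    rw [hQtarget] at h1
    have h2 : (fun k => Qpair f g h (P k)) = fun k => ((Qv k : ℝ) : EReal) := by
      funext k; exact hQval k
    rw [h2] at h1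
    exact EReal.tendsto_coe.1 h1
  -- convergence of the conjugate values via calmness + the affine minorant at x
  have hconjyb : fconj g yb = ((⟪x, yb⟫ - g x : ℝ) : EReal) := fconj_gradient hgcvx (hgdiff _ hgx)
  set rb : ℝ := ⟪x, yb⟫ - g x with hrbdef
  have hrlim : Tendsto r atTop (𝓝 rb) := by
    -- lower bound: affine minorant through x
    have hlow : ∀ k, ⟪x, ys k⟫ - g x ≤ r k := by
      intro k
      have := coe_sub_le_fconj g x (ys k)
      rw [hconjk k, EReal.coe_le_coe_iff] at this
      exact this
    have hlowlim : Tendsto (fun k => ⟪x, ys k⟫ - g x) atTop (𝓝 rb) := by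
      rw [hrbdef]
      exact ((tendsto_const_nhds.inner hys)).sub tendsto_const_nhds
    -- upper bound: calmness at yb
    have hybdom : yb ∈ edom (fconj g) := by
      rw [edom, Set.mem_setOf_eq, hconjyb]; exact EReal.coe_ne_top _
    obtain ⟨κ, hκ, B, hB, hcb⟩ := hcalm yb hybdom
    have hupev : ∀ᶠ k in atTop, r k ≤ rb + κ * ‖ys k - yb‖ := by
      filter_upwards [hys.eventually_mem hB] with k hkB
      have hkdom : ys k ∈ edom (fconj g) := by
        rw [edom, Set.mem_setOf_eq, hconjk k]; exact EReal.coe_ne_top _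
      have := (hcb (ys k) ⟨hkB, hkdom⟩).1
      rw [hconjk k, hconjyb, ← EReal.coe_add, EReal.coe_le_coe_iff] at this
      exact this
    have hbup : Tendsto (fun k => rb + κ * ‖ys k - yb‖) atTop (𝓝 rb) := by
      have hn : Tendsto (fun k => ‖ys k - yb‖) atTop (𝓝 0) :=
        (tendsto_iff_norm_sub_tendsto_zero.1 hys)
      have := hn.const_mul κ
      rw [mul_zero] at this
      simpa using tendsto_const_nhds.add this
    exact tendsto_of_tendsto_of_tendsto_of_le_of_le' hlowlim hbup
      (Eventually.of_forall hlow) hupev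
  -- convergence of denominators and numerators
  have hηlim : Tendsto η atTop (𝓝 (g x)) := by
    have h1 : Tendsto (fun k => ⟪xs k, ys k⟫ - r k) atTop (𝓝 (⟪x, yb⟫ - rb)) :=
      (hxs.inner hys).sub hrlim
    have h2 : ⟪x, yb⟫ - rb = g x := by rw [hrbdef]; ring
    rw [h2] at h1
    exact h1.congr (fun k => (hηform k).symm)
  have hζlim : Tendsto ζs atTop (𝓝 ζb) := by
    have h1 : ∀ k, ζs k = Qv k * η k := fun k =>
      (div_mul_cancel₀ (ζs k) (hηpos k).ne').symm
    have h2 : Tendsto (fun k => Qv k * η k) atTop (𝓝 (Fb * g x)) := hQreal.mul hηlim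
    have h3 : Fb * g x = ζb := by rw [hFbdef]; field_simp
    rw [h3] at h2
    exact h2.congr (fun k => (h1 k).symm)
  have hgxs : Tendsto (fun k => g (xs k)) atTop (𝓝 (g x)) := (hgc.tendsto x).comp hxs
  set Fv : ℕ → ℝ := fun k => ζs k / g (xs k) with hFvdef
  have hFvlim : Tendsto Fv atTop (𝓝 Fb) := by
    have := hζlim.div hgxs hgpos.ne'
    rwa [hFbdef]
  have hopen : IsOpen {z : E | g z ≠ 0} := isOpen_compl_singleton.preimage hgc
  have hgradk : Tendsto (fun k => gradient g (xs k)) atTop (𝓝 yb) :=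
    ((hgradcont x hgx).continuousAt (hopen.mem_nhds hgx)).tendsto.comp hxs
  -- slice subgradients
  have hQnb : ∀ q : WithLp 2 (E × E), Qpair f g h q ≠ ⊥ := fun q => Qfun_ne_bot f g h _ _
  have husk : ∀ k, us k ∈ frSubdiff (fun z => Qfun f g h z (ys k)) (xs k) := by
    intro k
    exact fr_slice hQnb (hmem k)
  -- first product rule application: ξ k ∈ ∂̂ζ(xs k)
  have hξmem : ∀ k, η k • us k + Qv k • ys k ∈ frSubdiff (zeta f h) (xs k) := by
    intro k
    have hψcont : Continuous (fun z : E => ⟪z, ys k⟫ - r k) :=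
      (continuous_id.inner continuous_const).sub continuous_const
    have hψval : (fun z : E => ⟪z, ys k⟫ - r k) (xs k) = η k := (hηform k).symm
    have hψpos : 0 < (fun z : E => ⟪z, ys k⟫ - r k) (xs k) := by rw [hψval]; exact hηpos k
    have hw : ∀ ε > (0:ℝ), ∀ᶠ z in 𝓝 (xs k),
        |(⟪z, ys k⟫ - r k) - (⟪xs k, ys k⟫ - r k) - ⟪ys k, z - xs k⟫| ≤ ε * ‖z - xs k‖ := by
      intro ε hε
      refine Eventually.of_forall fun z => ?_
      have : (⟪z, ys k⟫ - r k) - (⟪xs k, ys k⟫ - r k) - ⟪ys k, z - xs k⟫ = 0 := by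
        have h1 : ⟪ys k, z - xs k⟫ = ⟪ys k, z⟫ - ⟪ys k, xs k⟫ := inner_sub_right _ _ _
        have h2 : ⟪ys k, z⟫ = ⟪z, ys k⟫ := real_inner_comm _ _
        have h3 : ⟪ys k, xs k⟫ = ⟪xs k, ys k⟫ := real_inner_comm _ _
        rw [h1, h2, h3]
        ring
      rw [this, abs_zero]
      positivity
    have hagree : ∀ᶠ z in 𝓝 (xs k), zeta f h z =
        Qfun f g h z (ys k) * (((⟪z, ys k⟫ - r k : ℝ)) : EReal) := by
      have hopenψ : IsOpen {z : E | 0 < ⟪z, ys k⟫ - r k} := isOpen_lt continuous_const hψcont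
      filter_upwards [hopenψ.mem_nhds hψpos] with z hz
      have hetaz : eta g z (ys k) = ((⟪z, ys k⟫ - r k : ℝ) : EReal) := by
        rw [eta, hconjk k, ← EReal.coe_sub]
      have hetazpos : 0 < eta g z (ys k) := by rw [hetaz]; exact_mod_cast hz
      by_cases hfz : f z = ⊤
      · rw [(zeta_eq_top_iff (hfb z)).2 hfz]
        rw [Qfun, if_neg (by tauto), EReal.top_mul_coe_of_pos hz]
      · rw [zeta_coe hfz (hfb z), Qfun_eq hfz hetazpos, hetaz, EReal.toReal_coe,
          ← EReal.coe_mul]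
        congr 1
        field_simp
    have := prod_rule (fun z => Qfun_ne_bot f g h z (ys k))
      (fun z => Qfun_nonneg hzn hfb z (ys k)) (hQk k) (zeta_ne_bot hfb)
      hψpos hw hagree (husk k)
    rw [hQval k, EReal.toReal_coe] at this
    rw [show ⟪xs k, ys k⟫ - r k = η k from (hηform k).symm] at this
    exact this
  -- second product rule application: w k ∈ ∂̂F(xs k)
  set ws : ℕ → E := fun k => (g (xs k))⁻¹ • (η k • us k + Qv k • ys k)
    + ζs k • (-((g (xs k)) ^ 2)⁻¹ • gradient g (xs k)) with hwsdef
  have hwmem : ∀ k, ws k ∈ frSubdiff (Ffun f g h) (xs k) := by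
    intro k
    have hdg : DifferentiableAt ℝ g (xs k) := hgdiff _ (hgk k).ne'
    have hinv : HasFDerivAt (fun t : ℝ => t⁻¹)
        ((1 : ℝ →L[ℝ] ℝ).smulRight (-((g (xs k)) ^ 2)⁻¹)) (g (xs k)) :=
      hasFDerivAt_inv (hgk k).ne'
    have hcomp : HasFDerivAt (fun z => (g z)⁻¹)
        (((1 : ℝ →L[ℝ] ℝ).smulRight (-((g (xs k)) ^ 2)⁻¹)).comp (fderiv ℝ g (xs k)))
        (xs k) := hinv.comp (xs k) hdg.hasFDerivAt
    have hw := hw_of_hasFDerivAt hcomp (-((g (xs k)) ^ 2)⁻¹ • gradient g (xs k)) (by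
      intro v
      rw [real_inner_smul_left, inner_gradient_eq hdg]
      simp [ContinuousLinearMap.smulRight_apply]
      try ring)
    have hagree : ∀ᶠ z in 𝓝 (xs k), Ffun f g h z = zeta f h z * (((g z)⁻¹ : ℝ) : EReal) := by
      have hopeng : IsOpen {z : E | 0 < g z} := isOpen_lt continuous_const hgc
      filter_upwards [hopeng.mem_nhds (hgk k)] with z hz
      have hinvpos : 0 < (g z)⁻¹ := inv_pos.2 hz
      by_cases hfz : f z = ⊤
      · rw [Ffun, if_neg (by tauto), (zeta_eq_top_iff (hfb z)).2 hfz,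
          EReal.top_mul_coe_of_pos hinvpos]
      · rw [Ffun_eq (ne_of_gt hz) hfz, zeta_coe hfz (hfb z), ← EReal.coe_mul,
          div_eq_mul_inv]
    have hζxk : zeta f h (xs k) ≠ ⊤ := fun ht => hfk k ((zeta_eq_top_iff (hfb _)).1 ht)
    have := prod_rule (zeta_ne_bot hfb) (zeta_nonneg_all hzn) hζxk (Ffun_ne_bot f g h)
      (inv_pos.2 (hgk k)) hw hagree (hξmem k)
    have hζtr : (zeta f h (xs k)).toReal = ζs k := by
      rw [zeta_coe (hfk k) (hfb _), EReal.toReal_coe]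
    rw [hζtr] at this
    exact this
  -- pass to the limit
  have hwslim : Tendsto ws atTop (𝓝 (pr1 p)) := by
    have hξlim : Tendsto (fun k => η k • us k + Qv k • ys k) atTop
        (𝓝 (g x • pr1 p + Fb • yb)) := (hηlim.smul hus).add (hQreal.smul hys)
    have hinvlim : Tendsto (fun k => (g (xs k))⁻¹) atTop (𝓝 (g x)⁻¹) :=
      hgxs.inv₀ hgpos.ne'
    have hinv2lim : Tendsto (fun k => -((g (xs k)) ^ 2)⁻¹) atTop (𝓝 (-((g x) ^ 2)⁻¹)) :=
      ((hgxs.pow 2).inv₀ (pow_ne_zero 2 hgpos.ne')).neg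
    have hlim : Tendsto ws atTop (𝓝 ((g x)⁻¹ • (g x • pr1 p + Fb • yb)
        + ζb • (-((g x) ^ 2)⁻¹ • yb))) :=
      (hinvlim.smul hξlim).add (hζlim.smul (hinv2lim.smul hgradk))
    have heq : (g x)⁻¹ • (g x • pr1 p + Fb • yb) + ζb • (-((g x) ^ 2)⁻¹ • yb) = pr1 p := by
      rw [smul_add, smul_smul, smul_smul, smul_smul, inv_mul_cancel₀ hgpos.ne', one_smul,
        add_assoc, ← add_smul]
      have hc : (g x)⁻¹ * Fb + ζb * -((g x) ^ 2)⁻¹ = 0 := by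
        rw [hFbdef]
        have hgx0 : g x ≠ 0 := hgpos.ne'
        field_simp
        ring
      rw [hc, zero_smul, add_zero]
    rwa [heq] at hlim
  refine ⟨xs, ws, hxs, ?_, hwmem, hwslim⟩
  have h1 : (fun k => Ffun f g h (xs k)) = fun k => ((Fv k : ℝ) : EReal) := by
    funext k; exact Ffun_eq (hgk k).ne' (hfk k)
  rw [h1, hFxval]
  exact EReal.tendsto_coe.2 hFvlim

end Helpers7
section Helpers8
variable {E : Type*} [NormedAddCommGroup E] [InnerProductSpace ℝ E]
variable {g : E → ℝ}

lemma grad_mem_fr_fconj [CompleteSpace E] (hgcvx : ConvexOn ℝ Set.univ g) {x : E}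
    (hd : DifferentiableAt ℝ g x) : x ∈ frSubdiff (fconj g) (gradient g x) := by
  have hval : fconj g (gradient g x) = ((⟪x, gradient g x⟫ - g x : ℝ) : EReal) :=
    fconj_gradient hgcvx hd
  have hnt : fconj g (gradient g x) ≠ ⊤ := by rw [hval]; exact EReal.coe_ne_top _
  rw [mem_frSubdiff_iff (fconj_ne_bot g) hnt x]
  intro ε hε
  refine Eventually.of_forall fun z => ?_
  refine le_trans ?_ (coe_sub_le_fconj g x z)
  rw [EReal.coe_le_coe_iff, hval, EReal.toReal_coe]
  have h1 : ⟪x, z - gradient g x⟫ = ⟪x, z⟫ - ⟪x, gradient g x⟫ := inner_sub_right _ _ _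
  have h2 : 0 ≤ ε * ‖z - gradient g x‖ := mul_nonneg hε.le (norm_nonneg _)
  linarith
end Helpers8

/-- When `g` is continuously differentiable on `Ω` and `g^*` is calm on its domain,
the subdifferential distances of `F` and `Q` agree along `y = ∇g(x)`. -/
theorem statement6 {n : ℕ} (f : EuclideanSpace ℝ (Fin n) → EReal)
    (g h : EuclideanSpace ℝ (Fin n) → ℝ) (hb : Blanket f g h)
    (hgdiff : ∀ x, g x ≠ 0 → DifferentiableAt ℝ g x)
    (hgradcont : ContinuousOn (gradient g) {x | g x ≠ 0})
    (hcalm : CalmOn (fconj g) (edom (fconj g))) :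
    ∀ x : EuclideanSpace ℝ (Fin n), Ffun f g h x ≠ ⊤ →
      eta g x (gradient g x) = ((g x : ℝ) : EReal) ∧
      x ∈ limSubdiff (fconj g) (gradient g x) ∧
      EMetric.infEdist (0 : EuclideanSpace ℝ (Fin n)) (limSubdiff (Ffun f g h) x) =
        EMetric.infEdist
          (0 : WithLp 2 (EuclideanSpace ℝ (Fin n) × EuclideanSpace ℝ (Fin n)))
          (limSubdiff (Qpair f g h) (mk2 x (gradient g x))) ∧
      ((0 : EuclideanSpace ℝ (Fin n)) ∈ limSubdiff (Ffun f g h) x ↔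
        (0 : WithLp 2 (EuclideanSpace ℝ (Fin n) × EuclideanSpace ℝ (Fin n))) ∈
          limSubdiff (Qpair f g h) (mk2 x (gradient g x))) := by
  intro x hx
  obtain ⟨hgx, hfx⟩ := Ffun_ne_top_iff.1 hx
  have hzn := hb.zeta_nonneg
  have hfb := hb.f_proper.2
  have hgnn := hb.g_nonneg
  have hgcvx := hb.g_convex
  have hgc : Continuous g :=
    continuousOn_univ.1 (hgcvx.continuousOn isOpen_univ)
  have hd := hgdiff x hgx
  have hE1 : ∀ u ∈ limSubdiff (Ffun f g h) x,
      mk2 u 0 ∈ limSubdiff (Qpair f g h) (mk2 x (gradient g x)) := fun u hu =>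
    lim_incl_FQ hzn hfb hgnn hgcvx hgc hgdiff hgradcont hgx hfx hu
  have hE2 : ∀ q ∈ limSubdiff (Qpair f g h) (mk2 x (gradient g x)),
      pr1 q ∈ limSubdiff (Ffun f g h) x := fun q hq =>
    lim_incl_QF hzn hfb hgnn hgcvx hgc hgdiff hgradcont hcalm hgx hfx hq
  refine ⟨eta_gradient hgcvx hd, ?_, ?_, ?_⟩
  · exact ⟨fun _ => gradient g x, fun _ => x, tendsto_const_nhds, tendsto_const_nhds,
      fun _ => grad_mem_fr_fconj hgcvx hd, tendsto_const_nhds⟩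
  · apply le_antisymm
    · refine EMetric.le_infEdist.2 fun q hq => ?_
      have h1 := EMetric.infEdist_le_edist_of_mem (x := (0 : EuclideanSpace ℝ (Fin n))) (hE2 q hq)
      refine le_trans h1 ?_
      rw [edist_comm, edist_zero_right, edist_comm, edist_zero_right, enorm_eq_nnnorm, enorm_eq_nnnorm]
      exact_mod_cast norm_le_norm_mk2_left (pr1 q) (pr2 q)
    · refine EMetric.le_infEdist.2 fun u hu => ?_
      have h1 := EMetric.infEdist_le_edist_of_mem (x := (0 : WithLp 2 (EuclideanSpace ℝ (Fin n) × EuclideanSpace ℝ (Fin n)))) (hE1 u hu)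
      refine le_trans h1 ?_
      rw [edist_comm, edist_zero_right, edist_comm, edist_zero_right, enorm_eq_nnnorm, enorm_eq_nnnorm]
      apply le_of_eq
      have h2 : ‖mk2 u (0 : EuclideanSpace ℝ (Fin n))‖₊ = ‖u‖₊ :=
        NNReal.coe_injective (by simpa using norm_mk2_zero u)
      exact_mod_cast h2
  · constructor
    · intro h0
      have := hE1 0 h0
      rwa [mk2_zero] at this
    · intro h0
      exact hE2 0 h0
end Paper
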